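/- Let t_x, t_y, t_z, λ_x, λ_y, λ_z be real numbers and let ρ be a 2×2 complex matrix with Tr ρ = 1. Set a_j = Tr(ρ σ_j) for j ∈ {x,y,z}, and define Ψ(ρ) = (1/2)·(I + (t_x + λ_x a_x) σ_x + (t_y + λ_y a_y) σ_y + (t_z + λ_z a_z) σ_z). Define the kernel K(m,α,β; m',α',β') = δ_{m m'}·[ 1/2 − m t_x cos α sin β − m t_y sin α sin β + m t_z cos β + (3/2)·(λ_x cos α sin β cos α' sin β' + λ_y sin α sin β sin α' sin β' + λ_z cos β cos β') ]. Then for all m ∈ {−1/2,1/2} and real α, β: Σ_{m' ∈ {−1/2,1/2}} (1/(2π)) ∫₀^{2π} ∫₀^{π} K(m,α,β; m',α',β') · w_ρ(m',α',β') · sin β' dβ' dα' = Tr(Ψ(ρ) · U(m,α,β)). -/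

import Mathlib

set_option maxRecDepth 4000
set_option maxHeartbeats 1000000


open Matrix Real MeasureTheory intervalIntegral

noncomputable def sigmaX : Matrix (Fin 2) (Fin 2) ℂ := !![0, 1; 1, 0]
noncomputable def sigmaY : Matrix (Fin 2) (Fin 2) ℂ := !![0, -Complex.I; Complex.I, 0]
noncomputable def sigmaZ : Matrix (Fin 2) (Fin 2) ℂ := !![1, 0; 0, -1]

/-- The qubit de-quantizer U(m, α, β). -/
noncomputable def dequantizer (m α β : ℝ) : Matrix (Fin 2) (Fin 2) ℂ :=
  (1/2 : ℂ) • (1 : Matrix (Fin 2) (Fin 2) ℂ)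
    - ((m * Real.cos α * Real.sin β : ℝ) : ℂ) • sigmaX
    - ((m * Real.sin α * Real.sin β : ℝ) : ℂ) • sigmaY
    + ((m * Real.cos β : ℝ) : ℂ) • sigmaZ

/-- The qubit tomogram of a 2×2 complex matrix ρ. -/
noncomputable def tomogram (ρ : Matrix (Fin 2) (Fin 2) ℂ) (m α β : ℝ) : ℂ :=
  (ρ * dequantizer m α β).trace

/-- The non-unital qubit channel in canonical form with translation (t_x,t_y,t_z)
and scalings (λ_x,λ_y,λ_z). -/
noncomputable def Psi (tx ty tz lx ly lz : ℝ) (ρ : Matrix (Fin 2) (Fin 2) ℂ) :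
    Matrix (Fin 2) (Fin 2) ℂ :=
  (1/2 : ℂ) • ((1 : Matrix (Fin 2) (Fin 2) ℂ)
    + ((tx : ℂ) + (lx : ℂ) * (ρ * sigmaX).trace) • sigmaX
    + ((ty : ℂ) + (ly : ℂ) * (ρ * sigmaY).trace) • sigmaY
    + ((tz : ℂ) + (lz : ℂ) * (ρ * sigmaZ).trace) • sigmaZ)

/-- The tomographic kernel of the channel Ψ. -/
noncomputable def kernelPsi (tx ty tz lx ly lz : ℝ) (m α β m' α' β' : ℝ) : ℝ :=
  (if m = m' then (1:ℝ) else 0) *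
    (1/2 - m * tx * Real.cos α * Real.sin β - m * ty * Real.sin α * Real.sin β
      + m * tz * Real.cos β
      + (3/2) * (lx * Real.cos α * Real.sin β * Real.cos α' * Real.sin β'
          + ly * Real.sin α * Real.sin β * Real.sin α' * Real.sin β'
          + lz * Real.cos β * Real.cos β'))

lemma aux_inner_int (a b c d e f : ℂ) :
    (∫ x in (0:ℝ)..Real.pi,
      (a + b * (Real.sin x : ℂ) + c * (Real.cos x : ℂ) + d * (Real.sin x : ℂ)^2
        + e * (Real.sin x : ℂ) * (Real.cos x : ℂ) + f * (Real.cos x : ℂ)^2)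
        * (Real.sin x : ℂ))
    = 2*a + ((Real.pi : ℂ)/2)*b + (4/3)*d + (2/3)*f := by
  have key : ∀ x : ℝ, HasDerivAt
      (fun y : ℝ => -a * (Real.cos y : ℂ)
        + b * (((y:ℂ) - (Real.sin y : ℂ) * (Real.cos y : ℂ))/2)
        + c * ((Real.sin y : ℂ) * (Real.sin y : ℂ))/2
        + d * ((Real.cos y : ℂ) * (Real.cos y : ℂ) * (Real.cos y : ℂ)/3 - (Real.cos y : ℂ))
        + e * ((Real.sin y : ℂ) * (Real.sin y : ℂ) * (Real.sin y : ℂ))/3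
        - f * ((Real.cos y : ℂ) * (Real.cos y : ℂ) * (Real.cos y : ℂ))/3)
      ((a + b * (Real.sin x : ℂ) + c * (Real.cos x : ℂ) + d * (Real.sin x : ℂ)^2
        + e * (Real.sin x : ℂ) * (Real.cos x : ℂ) + f * (Real.cos x : ℂ)^2)
        * (Real.sin x : ℂ)) x := by
    intro x
    have hs : HasDerivAt (fun y : ℝ => ((Real.sin y : ℂ))) ((Real.cos x : ℂ)) x :=
      HasDerivAt.ofReal_comp (Real.hasDerivAt_sin x)
    have hc : HasDerivAt (fun y : ℝ => ((Real.cos y : ℂ))) (-(Real.sin x : ℂ)) x := by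
      simpa only [Complex.ofReal_neg] using HasDerivAt.ofReal_comp (Real.hasDerivAt_cos x)
    have hid : HasDerivAt (fun y : ℝ => ((y:ℂ))) 1 x := HasDerivAt.ofReal_comp (hasDerivAt_id x)
    have h1 : HasDerivAt (fun y : ℝ => -a * (Real.cos y : ℂ))
        (-a * (-(Real.sin x : ℂ))) x := hc.const_mul _
    have h2 := (((hid.sub (hs.mul hc)).div_const 2).const_mul b)
    have h3 := (((hs.mul hs).const_mul c).div_const 2)
    have h4 := (((((hc.mul hc).mul hc).div_const 3).sub hc).const_mul d)
    have h5 := (((hs.mul hs).mul hs).const_mul e).div_const 3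
    have h6 := ((((hc.mul hc).mul hc).const_mul f).div_const 3)
    have H := ((((h1.add h2).add h3).add h4).add h5).sub h6
    convert H using 1
    · rfl
    · rfl
    simp only [Pi.mul_apply]
    have hpy : (Real.sin x : ℂ)^2 + (Real.cos x : ℂ)^2 = 1 := by
      norm_cast; exact Real.sin_sq_add_cos_sq x
    linear_combination (d * (Real.sin x : ℂ) + b/2) * hpy
  have hcont : Continuous (fun x : ℝ =>
      (a + b * (Real.sin x : ℂ) + c * (Real.cos x : ℂ) + d * (Real.sin x : ℂ)^2
        + e * (Real.sin x : ℂ) * (Real.cos x : ℂ) + f * (Real.cos x : ℂ)^2)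
        * (Real.sin x : ℂ)) := by fun_prop
  rw [intervalIntegral.integral_eq_sub_of_hasDerivAt (fun x _ => key x)
    (hcont.intervalIntegrable 0 Real.pi)]
  simp [Real.sin_pi, Real.cos_pi]
  ring

lemma aux_outer_int (a b c d e f : ℂ) :
    (∫ x in (0:ℝ)..(2*Real.pi),
      (a + b * (Real.cos x : ℂ) + c * (Real.sin x : ℂ) + d * (Real.cos x : ℂ)^2
        + e * (Real.cos x : ℂ) * (Real.sin x : ℂ) + f * (Real.sin x : ℂ)^2))
    = 2*(Real.pi:ℂ)*a + (Real.pi:ℂ)*d + (Real.pi:ℂ)*f := by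
  have key : ∀ x : ℝ, HasDerivAt
      (fun y : ℝ => a * (y:ℂ) + b * (Real.sin y : ℂ) - c * (Real.cos y : ℂ)
        + d * (((y:ℂ) + (Real.sin y : ℂ) * (Real.cos y : ℂ))/2)
        + e * ((Real.sin y : ℂ) * (Real.sin y : ℂ))/2
        + f * (((y:ℂ) - (Real.sin y : ℂ) * (Real.cos y : ℂ))/2))
      (a + b * (Real.cos x : ℂ) + c * (Real.sin x : ℂ) + d * (Real.cos x : ℂ)^2
        + e * (Real.cos x : ℂ) * (Real.sin x : ℂ) + f * (Real.sin x : ℂ)^2) x := by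
    intro x
    have hs : HasDerivAt (fun y : ℝ => ((Real.sin y : ℂ))) ((Real.cos x : ℂ)) x :=
      HasDerivAt.ofReal_comp (Real.hasDerivAt_sin x)
    have hc : HasDerivAt (fun y : ℝ => ((Real.cos y : ℂ))) (-(Real.sin x : ℂ)) x := by
      simpa only [Complex.ofReal_neg] using HasDerivAt.ofReal_comp (Real.hasDerivAt_cos x)
    have hid : HasDerivAt (fun y : ℝ => ((y:ℂ))) 1 x := HasDerivAt.ofReal_comp (hasDerivAt_id x)
    have H := (((((hid.const_mul a).add (hs.const_mul b)).sub (hc.const_mul c)).add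
      (((hid.add (hs.mul hc)).div_const 2).const_mul d)).add
      (((hs.mul hs).const_mul e).div_const 2)).add
      (((hid.sub (hs.mul hc)).div_const 2).const_mul f)
    convert H using 1
    · rfl
    · rfl
    have hpy : (Real.sin x : ℂ)^2 + (Real.cos x : ℂ)^2 = 1 := by
      norm_cast; exact Real.sin_sq_add_cos_sq x
    linear_combination ((d + f)/2) * hpy
  have hcont : Continuous (fun x : ℝ =>
      (a + b * (Real.cos x : ℂ) + c * (Real.sin x : ℂ) + d * (Real.cos x : ℂ)^2
        + e * (Real.cos x : ℂ) * (Real.sin x : ℂ) + f * (Real.sin x : ℂ)^2)) := by fun_prop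
  rw [intervalIntegral.integral_eq_sub_of_hasDerivAt (fun x _ => key x)
    (hcont.intervalIntegrable 0 (2*Real.pi))]
  simp [Real.sin_two_pi, Real.cos_two_pi]
  ring

lemma aux_master (k0 k1 k2 k3 w0 w1 w2 w3 : ℂ) :
    (1 / (2 * (Real.pi : ℂ))) *
      ∫ A in (0:ℝ)..(2*Real.pi), ∫ B in (0:ℝ)..Real.pi,
        (k0 + k1 * (Real.cos A : ℂ) * (Real.sin B : ℂ)
          + k2 * (Real.sin A : ℂ) * (Real.sin B : ℂ) + k3 * (Real.cos B : ℂ))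
        * (w0 + w1 * (Real.cos A : ℂ) * (Real.sin B : ℂ)
          + w2 * (Real.sin A : ℂ) * (Real.sin B : ℂ) + w3 * (Real.cos B : ℂ))
        * (Real.sin B : ℂ)
    = 2*k0*w0 + (2/3)*(k1*w1 + k2*w2 + k3*w3) := by
  have hin : ∀ A : ℝ,
      (∫ B in (0:ℝ)..Real.pi,
        (k0 + k1 * (Real.cos A : ℂ) * (Real.sin B : ℂ)
          + k2 * (Real.sin A : ℂ) * (Real.sin B : ℂ) + k3 * (Real.cos B : ℂ))
        * (w0 + w1 * (Real.cos A : ℂ) * (Real.sin B : ℂ)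
          + w2 * (Real.sin A : ℂ) * (Real.sin B : ℂ) + w3 * (Real.cos B : ℂ))
        * (Real.sin B : ℂ))
      = (2*(k0*w0) + (2/3)*(k3*w3))
        + ((Real.pi:ℂ)/2)*(k0*w1 + k1*w0) * (Real.cos A : ℂ)
        + ((Real.pi:ℂ)/2)*(k0*w2 + k2*w0) * (Real.sin A : ℂ)
        + (4/3)*(k1*w1) * (Real.cos A : ℂ)^2
        + (4/3)*(k1*w2 + k2*w1) * (Real.cos A : ℂ) * (Real.sin A : ℂ)
        + (4/3)*(k2*w2) * (Real.sin A : ℂ)^2 := by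
    intro A
    rw [show (fun B : ℝ =>
        (k0 + k1 * (Real.cos A : ℂ) * (Real.sin B : ℂ)
          + k2 * (Real.sin A : ℂ) * (Real.sin B : ℂ) + k3 * (Real.cos B : ℂ))
        * (w0 + w1 * (Real.cos A : ℂ) * (Real.sin B : ℂ)
          + w2 * (Real.sin A : ℂ) * (Real.sin B : ℂ) + w3 * (Real.cos B : ℂ))
        * (Real.sin B : ℂ))
      = (fun B : ℝ =>
        ((k0*w0) + (k0*(w1*(Real.cos A : ℂ) + w2*(Real.sin A : ℂ))
            + (k1*(Real.cos A : ℂ) + k2*(Real.sin A : ℂ))*w0) * (Real.sin B : ℂ)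
          + (k0*w3 + k3*w0) * (Real.cos B : ℂ)
          + ((k1*(Real.cos A : ℂ) + k2*(Real.sin A : ℂ))
              * (w1*(Real.cos A : ℂ) + w2*(Real.sin A : ℂ))) * (Real.sin B : ℂ)^2
          + ((k1*(Real.cos A : ℂ) + k2*(Real.sin A : ℂ))*w3
              + k3*(w1*(Real.cos A : ℂ) + w2*(Real.sin A : ℂ)))
            * (Real.sin B : ℂ) * (Real.cos B : ℂ)
          + (k3*w3) * (Real.cos B : ℂ)^2) * (Real.sin B : ℂ))
      from funext fun B => by ring]
    rw [aux_inner_int]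
    ring
  simp only [hin]
  rw [show (fun A : ℝ =>
      (2*(k0*w0) + (2/3)*(k3*w3))
        + ((Real.pi:ℂ)/2)*(k0*w1 + k1*w0) * (Real.cos A : ℂ)
        + ((Real.pi:ℂ)/2)*(k0*w2 + k2*w0) * (Real.sin A : ℂ)
        + (4/3)*(k1*w1) * (Real.cos A : ℂ)^2
        + (4/3)*(k1*w2 + k2*w1) * (Real.cos A : ℂ) * (Real.sin A : ℂ)
        + (4/3)*(k2*w2) * (Real.sin A : ℂ)^2)
    = (fun A : ℝ =>
      ((2*(k0*w0) + (2/3)*(k3*w3))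
        + (((Real.pi:ℂ)/2)*(k0*w1 + k1*w0)) * (Real.cos A : ℂ)
        + (((Real.pi:ℂ)/2)*(k0*w2 + k2*w0)) * (Real.sin A : ℂ)
        + ((4/3)*(k1*w1)) * (Real.cos A : ℂ)^2
        + ((4/3)*(k1*w2 + k2*w1)) * (Real.cos A : ℂ) * (Real.sin A : ℂ)
        + ((4/3)*(k2*w2)) * (Real.sin A : ℂ)^2))
    from funext fun A => by ring]
  rw [aux_outer_int]
  have hπ : (Real.pi : ℂ) ≠ 0 := Complex.ofReal_ne_zero.mpr Real.pi_ne_zero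
  field_simp
  ring

lemma aux_tomogram_eq (ρ : Matrix (Fin 2) (Fin 2) ℂ) (m α β : ℝ) :
    tomogram ρ m α β = (1/2) * ρ.trace
      - (m:ℂ) * (Real.cos α : ℂ) * (Real.sin β : ℂ) * (ρ * sigmaX).trace
      - (m:ℂ) * (Real.sin α : ℂ) * (Real.sin β : ℂ) * (ρ * sigmaY).trace
      + (m:ℂ) * (Real.cos β : ℂ) * (ρ * sigmaZ).trace := by
  simp only [tomogram, dequantizer, Matrix.mul_sub, Matrix.mul_add, Matrix.mul_smul,
    Matrix.mul_one, Matrix.trace_add, Matrix.trace_sub, Matrix.trace_smul, smul_eq_mul]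
  push_cast
  ring

lemma aux_trace_Psi (tx ty tz lx ly lz m α β : ℝ) (ρ : Matrix (Fin 2) (Fin 2) ℂ) :
    (Psi tx ty tz lx ly lz ρ * dequantizer m α β).trace
    = 1/2 - (m:ℂ) * ((tx:ℂ) + (lx:ℂ) * (ρ * sigmaX).trace) * (Real.cos α : ℂ) * (Real.sin β : ℂ)
      - (m:ℂ) * ((ty:ℂ) + (ly:ℂ) * (ρ * sigmaY).trace) * (Real.sin α : ℂ) * (Real.sin β : ℂ)
      + (m:ℂ) * ((tz:ℂ) + (lz:ℂ) * (ρ * sigmaZ).trace) * (Real.cos β : ℂ) := by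
  simp [Psi, dequantizer, sigmaX, sigmaY, sigmaZ, Matrix.trace_fin_two,
    Matrix.mul_apply, Fin.sum_univ_two, Matrix.one_apply]
  ring_nf
  linear_combination ((ly:ℂ)*(m:ℂ)*Complex.sin β*Complex.sin α*(ρ 0 1 - ρ 1 0)*Complex.I
    + (m:ℂ)*(ty:ℂ)*Complex.sin β*Complex.sin α) * Complex.I_sq

theorem kernelPsi_represents (tx ty tz lx ly lz : ℝ)
    (ρ : Matrix (Fin 2) (Fin 2) ℂ) (hρ : ρ.trace = 1) :
    ∀ m : ℝ, m = -(1/2) ∨ m = 1/2 → ∀ α β : ℝ,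
      (1 / (2 * (Real.pi : ℂ))) *
        ∫ α' in (0:ℝ)..(2 * Real.pi), ∫ β' in (0:ℝ)..Real.pi,
          ((kernelPsi tx ty tz lx ly lz m α β (1/2) α' β' : ℂ) * tomogram ρ (1/2) α' β'
            + (kernelPsi tx ty tz lx ly lz m α β (-(1/2)) α' β' : ℂ)
                * tomogram ρ (-(1/2)) α' β')
          * (Real.sin β' : ℂ)
      = (Psi tx ty tz lx ly lz ρ * dequantizer m α β).trace := by
  intro m hm α β
  have key : ∀ A B : ℝ,
      ((kernelPsi tx ty tz lx ly lz m α β (1/2) A B : ℂ) * tomogram ρ (1/2) A B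
        + (kernelPsi tx ty tz lx ly lz m α β (-(1/2)) A B : ℂ)
            * tomogram ρ (-(1/2)) A B)
        * (Real.sin B : ℂ)
      = (((1/2 : ℂ) - (m:ℂ)*(tx:ℂ)*(Real.cos α : ℂ)*(Real.sin β : ℂ)
            - (m:ℂ)*(ty:ℂ)*(Real.sin α : ℂ)*(Real.sin β : ℂ)
            + (m:ℂ)*(tz:ℂ)*(Real.cos β : ℂ))
          + ((3/2 : ℂ)*(lx:ℂ)*(Real.cos α : ℂ)*(Real.sin β : ℂ))
              * (Real.cos A : ℂ) * (Real.sin B : ℂ)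
          + ((3/2 : ℂ)*(ly:ℂ)*(Real.sin α : ℂ)*(Real.sin β : ℂ))
              * (Real.sin A : ℂ) * (Real.sin B : ℂ)
          + ((3/2 : ℂ)*(lz:ℂ)*(Real.cos β : ℂ)) * (Real.cos B : ℂ))
        * ((1/2 : ℂ)
          + (-(m:ℂ) * (ρ * sigmaX).trace) * (Real.cos A : ℂ) * (Real.sin B : ℂ)
          + (-(m:ℂ) * (ρ * sigmaY).trace) * (Real.sin A : ℂ) * (Real.sin B : ℂ)
          + ((m:ℂ) * (ρ * sigmaZ).trace) * (Real.cos B : ℂ))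
        * (Real.sin B : ℂ) := by
    intro A B
    rcases hm with h | h <;> subst h <;>
      · rw [aux_tomogram_eq, aux_tomogram_eq, hρ]
        simp only [kernelPsi]
        norm_num
        ring_nf
        exact Or.inl trivial
  simp only [key]
  rw [aux_master, aux_trace_Psi]
  ring
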